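/- Let G be a finite group and let (ρ_t)_{t∈T} be a complete family of irreducible unitary matrix representations of G with dimensions n_t. Let U be the matrix with rows indexed by triples (t,i,j) (t ∈ T, i,j ∈ Fin n_t) and columns indexed by G, with entries U_{(t,i,j),g} = (n_t/|G|)^{1/2} · ρ_t(g)_{ij}, viewed as a square matrix via any bijection between {(t,i,j)} and G (which exist since Σ_t n_t² = |G|). Let s := |{g ∈ G : g = g⁻¹}|. Then det(U)² = (−1)^{(|G|−s)/2 + Σ_{t∈T} n_t(n_t−1)/2} (a quantity independent of the chosen bijection). -/

import Mathlib

/-- The representation on `Fin m → ℂ` associated to a matrix representation. -/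
noncomputable def matRep {G : Type*} [Monoid G] {m : ℕ}
    (ρ : G →* Matrix (Fin m) (Fin m) ℂ) : Representation ℂ G (Fin m → ℂ) :=
  (Matrix.toLinAlgEquiv'.toAlgHom.toRingHom.toMonoidHom).comp ρ
/-- The matrix `Σ_g x_g ρ(g)` with entries in `MvPolynomial G ℂ`. -/
noncomputable def repMatrix {G : Type*} [Group G] [Fintype G] {m : ℕ}
    (ρ : G →* Matrix (Fin m) (Fin m) ℂ) :
    Matrix (Fin m) (Fin m) (MvPolynomial G ℂ) :=
  ∑ g : G, (MvPolynomial.X g : MvPolynomial G ℂ) • (ρ g).map (MvPolynomial.C : ℂ → MvPolynomial G ℂ)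
/-- A complete family of irreducible unitary matrix representations of a finite group `G`:
each `ρ t g` is unitary, each `ρ t` is irreducible (the associated module over
`MonoidAlgebra ℂ G` is simple), the representations are pairwise non-isomorphic, and
`Σ_t n_t² = |G|`. -/
structure IsCompleteIrrFamily (G : Type*) [Group G] [Fintype G]
    {T : Type*} [Fintype T] (n : T → ℕ)
    (ρ : ∀ t, G →* Matrix (Fin (n t)) (Fin (n t)) ℂ) : Prop where
  unitary : ∀ t g, ρ t g ∈ Matrix.unitaryGroup (Fin (n t)) ℂ
  irred : ∀ t, IsSimpleModule (MonoidAlgebra ℂ G) (matRep (ρ t)).asModule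
  noniso : ∀ t t', t ≠ t' →
    IsEmpty ((matRep (ρ t)).asModule ≃ₗ[MonoidAlgebra ℂ G] (matRep (ρ t')).asModule)
  sum_sq : ∑ t, (n t) ^ 2 = Fintype.card G

set_option linter.unusedSectionVars false

section
variable {G : Type*} [Group G] [Fintype G] {m m' : ℕ}
  (ρ : G →* Matrix (Fin m) (Fin m) ℂ) (ρ' : G →* Matrix (Fin m') (Fin m') ℂ)

theorem asAlgebraHom_comm (A : Matrix (Fin m) (Fin m') ℂ)
    (hA : ∀ g, ρ g * A = A * ρ' g) (r : MonoidAlgebra ℂ G) :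
    Matrix.toLin' A ∘ₗ (matRep ρ').asAlgebraHom r
      = (matRep ρ).asAlgebraHom r ∘ₗ Matrix.toLin' A := by
  induction r using MonoidAlgebra.induction_on with
  | of g =>
    rw [MonoidAlgebra.of_apply, Representation.asAlgebraHom_single,
      Representation.asAlgebraHom_single, one_smul, one_smul]
    show Matrix.toLin' A ∘ₗ Matrix.toLin' (ρ' g) = Matrix.toLin' (ρ g) ∘ₗ Matrix.toLin' A
    rw [← Matrix.toLin'_mul, ← Matrix.toLin'_mul, hA]
  | add f g hf hg =>
    simp only [map_add, LinearMap.add_comp, LinearMap.comp_add, hf, hg]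
  | smul r f hf =>
    simp only [map_smul, LinearMap.smul_comp, LinearMap.comp_smul, hf]

/-- The `MonoidAlgebra`-linear map associated to an intertwining matrix. -/
noncomputable def intertwinerHom (A : Matrix (Fin m) (Fin m') ℂ)
    (hA : ∀ g, ρ g * A = A * ρ' g) :
    (matRep ρ').asModule →ₗ[MonoidAlgebra ℂ G] (matRep ρ).asModule where
  toFun := Matrix.toLin' A
  map_add' := map_add _
  map_smul' r x := LinearMap.congr_fun (asAlgebraHom_comm ρ ρ' A hA r) x

end
set_option linter.unusedSectionVars false
section
variable {G : Type*} [Group G] [Fintype G] {m m' : ℕ}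
  (ρ : G →* Matrix (Fin m) (Fin m) ℂ) (ρ' : G →* Matrix (Fin m') (Fin m') ℂ)

theorem schur_zero
    (h1 : IsSimpleModule (MonoidAlgebra ℂ G) (matRep ρ).asModule)
    (h2 : IsSimpleModule (MonoidAlgebra ℂ G) (matRep ρ').asModule)
    (hni : IsEmpty ((matRep ρ').asModule ≃ₗ[MonoidAlgebra ℂ G] (matRep ρ).asModule))
    (A : Matrix (Fin m) (Fin m') ℂ) (hA : ∀ g, ρ g * A = A * ρ' g) : A = 0 := by
  have := (intertwinerHom ρ ρ' A hA).bijective_or_eq_zero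
  rcases this with hb | hz
  · exact (hni.false (LinearEquiv.ofBijective _ hb)).elim
  · have hz' : Matrix.toLin' A = 0 := by
      ext x j
      have := LinearMap.congr_fun hz (Pi.single x 1 : (matRep ρ').asModule)
      exact congrFun this j
    have h2 := congrArg Matrix.toLin'.symm hz'
    simpa using h2
end
section
variable {G : Type*} [Group G] [Fintype G] {m : ℕ}
  (ρ : G →* Matrix (Fin m) (Fin m) ℂ)

theorem schur_scalar (hm : 0 < m)
    (h1 : IsSimpleModule (MonoidAlgebra ℂ G) (matRep ρ).asModule)
    (A : Matrix (Fin m) (Fin m) ℂ) (hA : ∀ g, ρ g * A = A * ρ g) :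
    ∃ c : ℂ, A = c • 1 := by
  haveI : NeZero m := ⟨hm.ne'⟩
  obtain ⟨μ, hμ⟩ := Module.End.exists_eigenvalue (Matrix.toLin' A)
  obtain ⟨v, hv, hv0⟩ := hμ.exists_hasEigenvector
  refine ⟨μ, ?_⟩
  set B := A - μ • 1 with hB
  have hBA : ∀ g, ρ g * B = B * ρ g := by
    intro g
    simp [hB, mul_sub, sub_mul, hA g, Matrix.mul_smul, Matrix.smul_mul]
  by_contra hne
  have hBne : B ≠ 0 := fun h => hne (by rw [← sub_eq_zero]; exact h)
  have := (intertwinerHom ρ ρ B hBA).bijective_or_eq_zero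
  rcases this with hb | hz
  · -- B is invertible as linear map, but Bv = 0, v ≠ 0
    have hBv : Matrix.toLin' B v = 0 := by
      rw [hB, map_sub, LinearMap.sub_apply, map_smul]
      simp only [Matrix.toLin'_one, LinearMap.smul_apply, LinearMap.id_apply]
      have hv' : Matrix.toLin' A v = μ • v := Module.End.mem_eigenspace_iff.mp hv
      rw [hv']
      exact sub_self _
    have : (v : (matRep ρ).asModule) = 0 := hb.injective (by
      show Matrix.toLin' B v = Matrix.toLin' B 0
      rw [hBv, map_zero])
    exact hv0 this
  · apply hBne
    have hz' : Matrix.toLin' B = 0 := by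
      ext x j
      have h3 := LinearMap.congr_fun hz (Pi.single x 1 : (matRep ρ).asModule)
      exact congrFun h3 j
    have h2 := congrArg Matrix.toLin'.symm hz'
    simpa using h2

end
section
variable {G : Type*} [Group G] [Fintype G] {m m' : ℕ}
  (ρ : G →* Matrix (Fin m) (Fin m) ℂ) (ρ' : G →* Matrix (Fin m') (Fin m') ℂ)

theorem rep_inv_eq_star (hu : ∀ g, ρ g ∈ Matrix.unitaryGroup (Fin m) ℂ) (g : G) :
    ρ g⁻¹ = star (ρ g) := by
  have h := Matrix.mem_unitaryGroup_iff.mp (hu g)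
  calc ρ g⁻¹ = ρ g⁻¹ * (ρ g * star (ρ g)) := by rw [h, mul_one]
    _ = (ρ g⁻¹ * ρ g) * star (ρ g) := by rw [mul_assoc]
    _ = star (ρ g) := by rw [← map_mul, inv_mul_cancel, map_one, one_mul]

theorem avg_comm (B : Matrix (Fin m) (Fin m') ℂ) (h : G) :
    ρ h * (∑ g : G, ρ g * B * ρ' g⁻¹) = (∑ g : G, ρ g * B * ρ' g⁻¹) * ρ' h := by
  rw [Matrix.sum_mul, Matrix.mul_sum]
  apply Fintype.sum_equiv (Equiv.mulLeft h)
  intro g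
  simp only [Equiv.coe_mulLeft, mul_inv_rev, map_mul, Matrix.mul_assoc]
  rw [← map_mul ρ', inv_mul_cancel, map_one, Matrix.mul_one]

theorem mul_stdBasis_mul (M : Matrix (Fin m) (Fin m) ℂ) (N : Matrix (Fin m') (Fin m') ℂ)
    (j i : Fin m) (j' i' : Fin m') :
    (M * Matrix.single j j' (1 : ℂ) * N) i i' = M i j * N j' i' := by
  rw [Matrix.mul_apply]
  have : ∀ k : Fin m', (M * Matrix.single j j' (1 : ℂ)) i k * N k i'
      = if k = j' then M i j * N j' i' else 0 := by
    intro k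
    rw [Matrix.mul_apply]
    by_cases hk : k = j'
    · subst hk
      simp [Matrix.single, Finset.sum_ite_eq, Finset.mul_sum]
    · have hcond : ∀ l : Fin m, Matrix.single j j' (1 : ℂ) l k = 0 := by
        intro l
        have hno : ¬(j = l ∧ j' = k) := fun h => hk h.2.symm
        simp [Matrix.single, hno]
      simp [hcond, hk]
  simp [this]

theorem orth_ne
    (h1 : IsSimpleModule (MonoidAlgebra ℂ G) (matRep ρ).asModule)
    (h2 : IsSimpleModule (MonoidAlgebra ℂ G) (matRep ρ').asModule)
    (hni : IsEmpty ((matRep ρ').asModule ≃ₗ[MonoidAlgebra ℂ G] (matRep ρ).asModule))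
    (hu' : ∀ g, ρ' g ∈ Matrix.unitaryGroup (Fin m') ℂ)
    (i j : Fin m) (i' j' : Fin m') :
    ∑ g : G, ρ g i j * (starRingEnd ℂ) (ρ' g i' j') = 0 := by
  have hz := schur_zero ρ ρ' h1 h2 hni (∑ g : G, ρ g * Matrix.single j j' 1 * ρ' g⁻¹)
    (avg_comm ρ ρ' _)
  have := congrFun (congrFun hz i) i'
  rw [Matrix.sum_apply] at this
  simp only [mul_stdBasis_mul, Matrix.zero_apply] at this
  rw [← this]
  apply Finset.sum_congr rfl
  intro g _
  rw [rep_inv_eq_star ρ' hu' g]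
  rfl

theorem orth_eq (hm : 0 < m)
    (h1 : IsSimpleModule (MonoidAlgebra ℂ G) (matRep ρ).asModule)
    (hu : ∀ g, ρ g ∈ Matrix.unitaryGroup (Fin m) ℂ)
    (i j i' j' : Fin m) :
    ∑ g : G, ρ g i j * (starRingEnd ℂ) (ρ g i' j')
      = (if i = i' then 1 else 0) * (if j = j' then 1 else 0)
        * ((Fintype.card G : ℂ) / (m : ℂ)) := by
  obtain ⟨c, hc⟩ := schur_scalar ρ hm h1 (∑ g : G, ρ g * Matrix.single j j' 1 * ρ g⁻¹)
    (avg_comm ρ ρ _)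
  -- compute the trace
  have htr : Matrix.trace (∑ g : G, ρ g * Matrix.single j j' 1 * ρ g⁻¹)
      = (Fintype.card G : ℂ) * (if j = j' then 1 else 0) := by
    rw [Matrix.trace_sum]
    have : ∀ g : G, Matrix.trace (ρ g * Matrix.single j j' 1 * ρ g⁻¹)
        = (if j = j' then 1 else 0) := by
      intro g
      rw [Matrix.trace_mul_cycle, ← map_mul, inv_mul_cancel, map_one, Matrix.one_mul]
      by_cases hjj : j = j'
      · subst hjj; simp [Matrix.trace_single_eq_same]
      · simp [Matrix.trace_single_eq_of_ne (c := (1 : ℂ)) (h := hjj), hjj]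
    simp [this, Finset.sum_const]
  have hc' : c * m = (Fintype.card G : ℂ) * (if j = j' then 1 else 0) := by
    rw [← htr, hc]
    simp [Matrix.trace_smul, Matrix.trace_one, mul_comm]
  have hm0 : (m : ℂ) ≠ 0 := Nat.cast_ne_zero.mpr hm.ne'
  have hcval : c = (Fintype.card G : ℂ) * (if j = j' then 1 else 0) / m :=
    (eq_div_iff hm0).mpr hc'
  have hent := congrFun (congrFun hc i) i'
  rw [Matrix.sum_apply] at hent
  simp only [mul_stdBasis_mul, Matrix.smul_apply, Matrix.one_apply, smul_eq_mul,
    mul_ite, mul_one, mul_zero] at hent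
  have : ∑ g : G, ρ g i j * (starRingEnd ℂ) (ρ g i' j') = if i = i' then c else 0 := by
    rw [← hent]
    · apply Finset.sum_congr rfl
      intro g _
      rw [rep_inv_eq_star ρ hu g]
      rfl
  rw [this, hcval]
  split_ifs <;> ring
end
theorem sign_involution {α : Type*} [DecidableEq α] [Fintype α] (f : Equiv.Perm α)
    (h2 : f * f = 1) :
    Equiv.Perm.sign f
      = (-1 : ℤˣ) ^ ((Fintype.card α - (Finset.univ.filter fun x => f x = x).card) / 2) := by
  have hsupp : f.support.card
      = Fintype.card α - (Finset.univ.filter fun x => f x = x).card := by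
    have hcc := Finset.card_filter_add_card_filter_not
      (s := (Finset.univ : Finset α)) (p := fun x => f x = x)
    rw [Finset.card_univ] at hcc
    rw [Equiv.Perm.support]
    have hrfl : (Finset.filter (fun x => ¬ f x = x) Finset.univ).card
        = (Finset.filter (fun x => f x ≠ x) Finset.univ).card := rfl
    omega
  by_cases h1 : f = 1
  · subst h1
    simp
  · have horder : orderOf f = 2 := by
      apply orderOf_eq_prime _ h1
      rw [sq]; exact h2
    have hct : f.cycleType = Multiset.replicate (Multiset.card f.cycleType) 2 := by
      apply Multiset.eq_replicate_card.mpr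
      intro c hc
      have hdvd : c ∣ 2 := by
        rw [← horder, ← Equiv.Perm.lcm_cycleType]
        exact Multiset.dvd_lcm hc
      have h2le : 2 ≤ c := Equiv.Perm.two_le_of_mem_cycleType hc
      have := Nat.le_of_dvd (by norm_num) hdvd
      omega
    have hsum : f.cycleType.sum = 2 * Multiset.card f.cycleType := by
      conv_lhs => rw [hct]
      rw [Multiset.sum_replicate]
      ring
    have hk : Multiset.card f.cycleType
        = (Fintype.card α - (Finset.univ.filter fun x => f x = x).card) / 2 := by
      have := Equiv.Perm.sum_cycleType f
      omega
    rw [Equiv.Perm.sign_of_cycleType, hsum, ← hk]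
    rw [pow_add, pow_mul]
    simp

theorem row_orth (G : Type*) [Group G] [Fintype G]
    (T : Type*) [Fintype T] [DecidableEq T] (n : T → ℕ)
    (ρ : ∀ t, G →* Matrix (Fin (n t)) (Fin (n t)) ℂ)
    (hρ : IsCompleteIrrFamily G n ρ)
    (x y : Σ t : T, Fin (n t) × Fin (n t)) :
    ∑ h : G, ((Real.sqrt ((n x.1 : ℝ) / (Fintype.card G : ℝ)) : ℂ) * ρ x.1 h x.2.1 x.2.2)
        * (starRingEnd ℂ)
          ((Real.sqrt ((n y.1 : ℝ) / (Fintype.card G : ℝ)) : ℂ) * ρ y.1 h y.2.1 y.2.2)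
      = if x = y then 1 else 0 := by
  obtain ⟨t, i, j⟩ := x
  obtain ⟨t', i', j'⟩ := y
  simp only [map_mul, Complex.conj_ofReal]
  by_cases ht : t = t'
  · subst ht
    have hpos : 0 < n t := i.pos
    have hcard : 0 < Fintype.card G := Fintype.card_pos
    have hsum : ∑ h : G, ρ t h i j * (starRingEnd ℂ) (ρ t h i' j')
        = (if i = i' then 1 else 0) * (if j = j' then 1 else 0)
          * ((Fintype.card G : ℂ) / (n t : ℂ)) :=
      orth_eq (ρ t) hpos (hρ.irred t) (hρ.unitary t) i j i' j'
    have hre : ((Real.sqrt ((n t : ℝ) / (Fintype.card G : ℝ)) : ℂ))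
        * ((Real.sqrt ((n t : ℝ) / (Fintype.card G : ℝ)) : ℂ))
        = (n t : ℂ) / (Fintype.card G : ℂ) := by
      rw [← Complex.ofReal_mul, Real.mul_self_sqrt (by positivity)]
      push_cast
      ring
    have heq : ((⟨t, i, j⟩ : Σ t : T, Fin (n t) × Fin (n t)) = ⟨t, i', j'⟩)
        ↔ (i = i' ∧ j = j') := by
      rw [Sigma.mk.inj_iff]
      simp [Prod.ext_iff]
    calc ∑ h : G, (Real.sqrt ((n t : ℝ) / (Fintype.card G : ℝ)) : ℂ) * ρ t h i j
          * ((Real.sqrt ((n t : ℝ) / (Fintype.card G : ℝ)) : ℂ)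
            * (starRingEnd ℂ) (ρ t h i' j'))
        = ((Real.sqrt ((n t : ℝ) / (Fintype.card G : ℝ)) : ℂ)
            * (Real.sqrt ((n t : ℝ) / (Fintype.card G : ℝ)) : ℂ))
          * ∑ h : G, ρ t h i j * (starRingEnd ℂ) (ρ t h i' j') := by
          rw [Finset.mul_sum]
          apply Finset.sum_congr rfl
          intro h _
          ring
      _ = if (⟨t, i, j⟩ : Σ t : T, Fin (n t) × Fin (n t)) = ⟨t, i', j'⟩ then 1 else 0 := by
          rw [hsum, hre]
          simp only [heq]
          have hn0 : (n t : ℂ) ≠ 0 := Nat.cast_ne_zero.mpr hpos.ne'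
          have hG0 : (Fintype.card G : ℂ) ≠ 0 := Nat.cast_ne_zero.mpr hcard.ne'
          split_ifs <;> simp_all <;> field_simp
  · have hsum : ∑ h : G, ρ t h i j * (starRingEnd ℂ) (ρ t' h i' j') = 0 :=
      orth_ne (ρ t) (ρ t') (hρ.irred t) (hρ.irred t') (hρ.noniso t' t (Ne.symm ht))
        (hρ.unitary t') i j i' j'
    have hne : ((⟨t, i, j⟩ : Σ t : T, Fin (n t) × Fin (n t)) ≠ ⟨t', i', j'⟩) := by
      intro h
      exact ht (congrArg Sigma.fst h)
    rw [if_neg hne]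
    calc ∑ h : G, (Real.sqrt ((n t : ℝ) / (Fintype.card G : ℝ)) : ℂ) * ρ t h i j
          * ((Real.sqrt ((n t' : ℝ) / (Fintype.card G : ℝ)) : ℂ)
            * (starRingEnd ℂ) (ρ t' h i' j'))
        = ((Real.sqrt ((n t : ℝ) / (Fintype.card G : ℝ)) : ℂ)
            * (Real.sqrt ((n t' : ℝ) / (Fintype.card G : ℝ)) : ℂ))
          * ∑ h : G, ρ t h i j * (starRingEnd ℂ) (ρ t' h i' j') := by
          rw [Finset.mul_sum]
          apply Finset.sum_congr rfl
          intro h _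
          ring
      _ = 0 := by rw [hsum, mul_zero]
/-- The square of the determinant of the group Fourier transform matrix
`U_{(t,i,j),g} = (n_t/|G|)^{1/2} ρ_t(g)_{ij}` (made square via any bijection
`e : G ≃ Σ t, Fin n_t × Fin n_t`) equals `(-1)^{(|G|-s)/2 + Σ_t n_t(n_t-1)/2}`,
where `s` is the number of elements of `G` equal to their own inverse. -/

theorem fourier_matrix_det_sq
    (G : Type*) [Group G] [Fintype G] [DecidableEq G]
    (T : Type*) [Fintype T] (n : T → ℕ)
    (ρ : ∀ t, G →* Matrix (Fin (n t)) (Fin (n t)) ℂ)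
    (hρ : IsCompleteIrrFamily G n ρ)
    (e : G ≃ Σ t : T, Fin (n t) × Fin (n t)) :
    let U : Matrix (Σ t : T, Fin (n t) × Fin (n t)) G ℂ :=
      fun s g => (Real.sqrt ((n s.1 : ℝ) / (Fintype.card G : ℝ)) : ℂ) * ρ s.1 g s.2.1 s.2.2
    let s : ℕ := (Finset.univ.filter fun g : G => g = g⁻¹).card
    (Matrix.det (Matrix.of fun g h : G => U (e g) h)) ^ 2 =
      (-1 : ℂ) ^ ((Fintype.card G - s) / 2 + ∑ t, n t * (n t - 1) / 2) := by
  classical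
  intro U s
  set M : Matrix G G ℂ := Matrix.of fun g h : G => U (e g) h with hMdef
  -- Step 1 : M is unitary
  have hM : M * M.conjTranspose = 1 := by
    ext a b
    rw [Matrix.mul_apply, Matrix.one_apply]
    have : ∀ h : G, M a h * M.conjTranspose h b
        = ((Real.sqrt ((n (e a).1 : ℝ) / (Fintype.card G : ℝ)) : ℂ)
            * ρ (e a).1 h (e a).2.1 (e a).2.2)
          * (starRingEnd ℂ)
            ((Real.sqrt ((n (e b).1 : ℝ) / (Fintype.card G : ℝ)) : ℂ)
              * ρ (e b).1 h (e b).2.1 (e b).2.2) := fun h => rfl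
    rw [Finset.sum_congr rfl fun h _ => this h]
    rw [row_orth G T n ρ hρ (e a) (e b)]
    simp [Equiv.apply_eq_iff_eq]
  have hdet1 : M.det * (starRingEnd ℂ) M.det = 1 := by
    have h := congrArg Matrix.det hM
    rwa [Matrix.det_mul, Matrix.det_conjTranspose, Matrix.det_one] at h
  -- Step 2 : the permutations
  let sw : Equiv.Perm (Σ t : T, Fin (n t) × Fin (n t)) :=
    ⟨fun x => ⟨x.1, x.2.2, x.2.1⟩, fun x => ⟨x.1, x.2.2, x.2.1⟩, fun x => rfl, fun x => rfl⟩
  let σ : Equiv.Perm G := (e.trans sw).trans e.symm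
  let τ : Equiv.Perm G := Equiv.inv G
  have hσapp : ∀ g, σ g = e.symm (sw (e g)) := fun g => rfl
  have hτapp : ∀ g, τ g = g⁻¹ := fun g => rfl
  -- Step 3 : conjugate matrix
  have hconj : M.map (starRingEnd ℂ) = M.submatrix σ τ := by
    ext g h
    show (starRingEnd ℂ) (M g h) = M (σ g) (τ h)
    have hesw : e (σ g) = sw (e g) := Equiv.apply_symm_apply e _
    have hR : M (σ g) (τ h)
        = (Real.sqrt ((n (e g).1 : ℝ) / (Fintype.card G : ℝ)) : ℂ)
          * ρ (e g).1 h⁻¹ (e g).2.2 (e g).2.1 := by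
      show U (e (σ g)) (τ h) = _
      rw [hesw]
      rfl
    rw [hR]
    show (starRingEnd ℂ) ((Real.sqrt ((n (e g).1 : ℝ) / (Fintype.card G : ℝ)) : ℂ)
        * ρ (e g).1 h (e g).2.1 (e g).2.2) = _
    rw [map_mul, Complex.conj_ofReal]
    congr 1
    rw [rep_inv_eq_star (ρ (e g).1) (hρ.unitary (e g).1) h]
    rfl
  -- Step 4 : determinant of the conjugate
  have hdet2 : (starRingEnd ℂ) M.det
      = ((Equiv.Perm.sign σ : ℤ) : ℂ) * ((Equiv.Perm.sign τ : ℤ) : ℂ) * M.det := by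
    rw [RingHom.map_det, RingHom.mapMatrix_apply, hconj]
    have hsub : M.submatrix σ τ = (M.submatrix id τ).submatrix σ id := by
      rw [Matrix.submatrix_submatrix]
      rfl
    rw [hsub, Matrix.det_permute, Matrix.det_permute']
    push_cast
    ring
  -- Step 5 : sign of τ
  have hτsign : Equiv.Perm.sign τ = (-1 : ℤˣ) ^ ((Fintype.card G - s) / 2) := by
    have h2 : τ * τ = 1 := by
      ext g
      simp [hτapp]
    rw [sign_involution τ h2]
    congr 2
    have hfe : (Finset.univ.filter fun g : G => τ g = g)
        = (Finset.univ.filter fun g : G => g = g⁻¹) := by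
      apply Finset.filter_congr
      intro g _
      simp only [hτapp]
      exact ⟨fun h => h.symm, fun h => h.symm⟩
    rw [hfe]
  -- Step 6 : sign of σ
  have hσsign : Equiv.Perm.sign σ = (-1 : ℤˣ) ^ ((Fintype.card G - ∑ t, n t) / 2) := by
    have h2 : σ * σ = 1 := by
      ext g
      show σ (σ g) = g
      rw [hσapp, hσapp, Equiv.apply_symm_apply]
      show e.symm (e g) = g
      exact e.symm_apply_apply g
    rw [sign_involution σ h2]
    congr 2
    have hfix : ∀ g : G, (σ g = g) ↔ ((e g).2.1 = (e g).2.2) := by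
      intro g
      rw [hσapp, Equiv.symm_apply_eq]
      obtain ⟨t, i, j⟩ := e g
      show (⟨t, j, i⟩ : Σ t : T, Fin (n t) × Fin (n t)) = ⟨t, i, j⟩ ↔ i = j
      rw [Sigma.mk.inj_iff]
      simp [Prod.ext_iff, eq_comm, and_comm]
    have hcards : (Finset.univ.filter fun g : G => σ g = g).card
        = (Finset.univ.filter fun x : Σ t : T, Fin (n t) × Fin (n t) => x.2.1 = x.2.2).card := by
      apply Finset.card_equiv e
      intro g
      simp [hfix g]
    have hcount : (Finset.univ.filter
        fun x : Σ t : T, Fin (n t) × Fin (n t) => x.2.1 = x.2.2).card = ∑ t, n t := by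
      rw [Finset.card_filter, ← Finset.univ_sigma_univ, Finset.sum_sigma]
      apply Finset.sum_congr rfl
      intro t _
      rw [Fintype.sum_prod_type]
      simp
    rw [hcards, hcount]
  -- Step 7 : arithmetic on exponents
  have hGcard : Fintype.card G = ∑ t, n t ^ 2 := hρ.sum_sq.symm
  have hterm : ∀ t, n t ^ 2 - n t = n t * (n t - 1) := by
    intro t
    cases hn : n t with
    | zero => simp
    | succ k =>
      rw [Nat.succ_sub_one, pow_two]
      rw [show (k + 1) * (k + 1) = (k + 1) * k + (k + 1) by ring]
      omega
  have hA : (Fintype.card G - ∑ t, n t) / 2 = ∑ t, n t * (n t - 1) / 2 := by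
    have hle : ∀ t, n t ≤ n t ^ 2 := fun t => by
      cases hn : n t with
      | zero => simp
      | succ k => nlinarith [sq_nonneg (k + 1)]
    have hsub : (∑ t, n t ^ 2) - (∑ t, n t) = ∑ t, (n t ^ 2 - n t) := by
      rw [Finset.sum_tsub_distrib]
      intro t _
      exact hle t
    have heven : ∀ t, 2 ∣ n t * (n t - 1) := by
      intro t
      rcases Nat.even_or_odd (n t) with he | ho
      · exact Dvd.dvd.mul_right he.two_dvd _
      · have h1 : (1 : ℕ) ≤ n t := ho.pos
        have : Even (n t - 1) := Nat.Odd.sub_odd ho odd_one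
        exact Dvd.dvd.mul_left this.two_dvd _
    have hdivsum : 2 * ∑ t, n t * (n t - 1) / 2 = ∑ t, n t * (n t - 1) := by
      rw [Finset.mul_sum]
      apply Finset.sum_congr rfl
      intro t _
      exact Nat.mul_div_cancel' (heven t)
    rw [hGcard, hsub]
    have : ∑ t, (n t ^ 2 - n t) = ∑ t, n t * (n t - 1) :=
      Finset.sum_congr rfl fun t _ => hterm t
    omega
  -- Step 8 : put everything together
  set d : ℂ := M.det with hd
  have hstar : (starRingEnd ℂ) d
      = (-1 : ℂ) ^ ((Fintype.card G - s) / 2 + ∑ t, n t * (n t - 1) / 2) * d := by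
    rw [hdet2, hσsign, hτsign, ← hA]
    push_cast
    ring
  have hfin : (-1 : ℂ) ^ ((Fintype.card G - s) / 2 + ∑ t, n t * (n t - 1) / 2) * d ^ 2
      = 1 := by
    calc (-1 : ℂ) ^ ((Fintype.card G - s) / 2 + ∑ t, n t * (n t - 1) / 2) * d ^ 2
        = d * ((-1 : ℂ) ^ ((Fintype.card G - s) / 2 + ∑ t, n t * (n t - 1) / 2) * d) := by
          ring
      _ = d * (starRingEnd ℂ) d := by rw [hstar]
      _ = 1 := hdet1
  have hsq : ((-1 : ℂ) ^ ((Fintype.card G - s) / 2 + ∑ t, n t * (n t - 1) / 2))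
      * ((-1 : ℂ) ^ ((Fintype.card G - s) / 2 + ∑ t, n t * (n t - 1) / 2)) = 1 := by
    rw [← pow_add, ← two_mul, pow_mul]
    norm_num
  calc d ^ 2 = ((-1 : ℂ) ^ ((Fintype.card G - s) / 2 + ∑ t, n t * (n t - 1) / 2)
        * (-1 : ℂ) ^ ((Fintype.card G - s) / 2 + ∑ t, n t * (n t - 1) / 2)) * d ^ 2 := by
        rw [hsq, one_mul]
    _ = (-1 : ℂ) ^ ((Fintype.card G - s) / 2 + ∑ t, n t * (n t - 1) / 2)
        * ((-1 : ℂ) ^ ((Fintype.card G - s) / 2 + ∑ t, n t * (n t - 1) / 2) * d ^ 2) := by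
        ring
    _ = (-1 : ℂ) ^ ((Fintype.card G - s) / 2 + ∑ t, n t * (n t - 1) / 2) := by
        rw [hfin, mul_one]
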